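/- arXiv:2212.13812 — 2 statements merged into one kernel-verified Lean document; each statement's English description precedes it below -/
import Mathlib

section
/- Let H be an r×n binary matrix such that every 4 distinct columns of H are linearly independent over GF(2) (equivalently, H is a parity check matrix of a code with minimum distance at least 5). Let Ĥ be the 2r×n matrix obtained by stacking H on top of its bitwise complement H̄. Then Ĥ is 4-decodable: every nonempty set of at most 4 columns of Ĥ contains a row of weight exactly one. -/
/-- `M` is `d`-decodable (rows indexed by an arbitrary type `ι`): every nonempty
set of at most `d` columns contains a row of weight exactly one. -/
def IsDecodable {ι : Type*} {n : ℕ} (M : ι → Fin n → ZMod 2) (d : ℕ) : Prop :=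
  ∀ S : Finset (Fin n), S.Nonempty → S.card ≤ d →
    ∃ i : ι, (S.filter (fun j => M i j = 1)).card = 1

theorem stack_complement_four_decodable {r n : ℕ}
    (H : Matrix (Fin r) (Fin n) (ZMod 2))
    -- every set of at most 4 distinct columns of `H` is linearly independent
    (hindep : ∀ S : Finset (Fin n), S.card ≤ 4 →
      LinearIndependent (ZMod 2) (fun j : {x // x ∈ S} => fun i => H i j.val)) :
    IsDecodable (Sum.elim (fun a j => H a j) (fun a j => 1 + H a j) :
      Fin r ⊕ Fin r → Fin n → ZMod 2) 4 := by
  intro S hSne hScard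
  by_contra hcon
  push_neg at hcon
  have zc : ∀ x : ZMod 2, x = 0 ∨ x = 1 := by decide
  have zf1 : ∀ x : ZMod 2, (1 + x = 1) ↔ x = 0 := by decide
  have zf2 : ∀ x : ZMod 2, (¬ x = 1) ↔ x = 0 := by decide
  have h1 : ∀ a : Fin r, (S.filter (fun j => H a j = 1)).card ≠ 1 := by
    intro a h'
    refine hcon (Sum.inl a) (Eq.trans ?_ h')
    congr 1
  have h2 : ∀ a : Fin r, (S.filter (fun j => H a j = 0)).card ≠ 1 := by
    intro a
    intro h'
    refine hcon (Sum.inr a) (Eq.trans ?_ h')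
    congr 1
    ext j
    simp [zf1]
  have hsum : ∀ a : Fin r,
      (S.filter (fun j => H a j = 1)).card + (S.filter (fun j => H a j = 0)).card = S.card := by
    intro a
    have h := Finset.card_filter_add_card_filter_not (s := S) (p := fun j => H a j = 1)
    rwa [Finset.filter_congr (fun j _ => zf2 (H a j))] at h
  have li := hindep S hScard
  by_cases hc1 : S.card = 1
  · obtain ⟨j, hj⟩ := Finset.card_eq_one.mp hc1
    have hnoR : ∀ a : Fin r, False := by
      intro a
      rcases zc (H a j) with h | h
      · exact h2 a (by rw [hj]; simp [Finset.filter_singleton, h])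
      · exact h1 a (by rw [hj]; simp [Finset.filter_singleton, h])
    exact li.ne_zero ⟨j, by simp [hj]⟩ (funext fun a => (hnoR a).elim)
  · by_cases hc4 : S.card = 4
    · have hzero : ∀ a : Fin r, ∑ j ∈ S, H a j = 0 := by
        intro a
        have hs := hsum a
        have hw1 := h1 a
        have hw2 := h2 a
        have hcast : ∑ j ∈ S, H a j = ((S.filter (fun j => H a j = 1)).card : ZMod 2) := by
          rw [← Finset.sum_filter_add_sum_filter_not S (fun j => H a j = 1)]
          have e1 : ∑ j ∈ S.filter (fun j => H a j = 1), H a j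
              = ((S.filter (fun j => H a j = 1)).card : ZMod 2) := by
            rw [Finset.sum_congr rfl (fun j hj => (Finset.mem_filter.mp hj).2)]
            simp
          have e2 : ∑ j ∈ S.filter (fun j => ¬H a j = 1), H a j = 0 := by
            apply Finset.sum_eq_zero
            intro j hj
            exact (zf2 (H a j)).mp (Finset.mem_filter.mp hj).2
          rw [e1, e2, add_zero]
        rw [hcast]
        have hcases : (S.filter (fun j => H a j = 1)).card = 0 ∨
            (S.filter (fun j => H a j = 1)).card = 2 ∨
            (S.filter (fun j => H a j = 1)).card = 4 := by omega
        rcases hcases with h | h | h <;> rw [h] <;> decide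
      rw [Fintype.linearIndependent_iff] at li
      obtain ⟨j, hjS⟩ := hSne
      refine one_ne_zero (li (fun _ => 1) ?_ ⟨j, hjS⟩)
      funext a
      simp only [one_smul, Finset.sum_apply]
      rw [Finset.sum_coe_sort S (fun j => H a j)]
      exact hzero a
    · have hc2 : 1 < S.card := by
        have := hSne.card_pos
        omega
      obtain ⟨j, hjS, k, hkS, hjk⟩ := Finset.one_lt_card.mp hc2
      have hcols : ∀ a : Fin r, H a j = H a k := by
        intro a
        by_contra hne
        have hS3 : S.card ≤ 3 := by omega
        have key : ∀ (x y : Fin n), x ∈ S → y ∈ S → H a x = 1 → H a y = 0 → False := by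
          intro x y hx hy hx1 hy0
          have w1 : 0 < (S.filter (fun j => H a j = 1)).card :=
            Finset.card_pos.mpr ⟨x, Finset.mem_filter.mpr ⟨hx, hx1⟩⟩
          have w0 : 0 < (S.filter (fun j => H a j = 0)).card :=
            Finset.card_pos.mpr ⟨y, Finset.mem_filter.mpr ⟨hy, hy0⟩⟩
          have hs := hsum a
          have hw1 := h1 a
          have hw2 := h2 a
          omega
        rcases zc (H a j) with hj' | hj' <;> rcases zc (H a k) with hk' | hk'
        · exact hne (hj'.trans hk'.symm)
        · exact key k j hkS hjS hk' hj'
        · exact key j k hjS hkS hj' hk'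
        · exact hne (hj'.trans hk'.symm)
      have heq : (⟨j, hjS⟩ : {x // x ∈ S}) = ⟨k, hkS⟩ := by
        apply li.injective
        funext a
        exact hcols a
      exact hjk (by simpa using heq)
end

section
/- For d = 3 the recursive doubling construction gives m*(n,3) ≤ 2⌈log₂ n⌉ − 1 for all n ≥ 4: stacking an all-ones row split into two halves (row (1…1,0…0), row (0…0,1…1)) over two side-by-side copies of an optimal 3-decodable matrix on ⌈n/2⌉ columns yields a 3-decodable matrix, and iterating from the base case m*(4,3)=3 gives 2⌈log₂ n⌉ − 1 rows. -/
set_option maxRecDepth 100000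


/-- `M` is `d`-decodable (general row/column index types): every nonempty set
of at most `d` columns contains a row of weight exactly one. -/
def IsDecodableG {ι κ : Type*} [DecidableEq κ] (M : ι → κ → Bool) (d : ℕ) : Prop :=
  ∀ S : Finset κ, S.Nonempty → S.card ≤ d →
    ∃ i : ι, (S.filter (fun j => M i j = true)).card = 1

/-- `m*(n,d)`: the minimum number of rows of a `d`-decodable binary matrix with
`n` columns. -/
noncomputable def mStar (n d : ℕ) : ℕ :=
  sInf {m | ∃ M : Fin m → Fin n → Bool, IsDecodableG M d}

/-- Stacking the two half all-ones rows over two side-by-side copies of `M`. -/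
def doubled {m c : ℕ} (M : Fin m → Fin c → Bool) :
    Fin 2 ⊕ Fin m → Fin c ⊕ Fin c → Bool :=
  fun r j =>
    Sum.elim (fun a : Fin 2 => if a = 0 then j.isLeft else j.isRight)
      (fun i => Sum.elim (M i) (M i) j) r

section Aux

variable {ι ι' κ κ' : Type*} [DecidableEq κ] [DecidableEq κ']

lemma isDecodableG_reindex {d : ℕ} (r : ι' → ι) (hr : Function.Surjective r)
    (e : κ' ↪ κ) {M : ι → κ → Bool} (hM : IsDecodableG M d) :
    IsDecodableG (fun i j => M (r i) (e j)) d := by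
  intro S hS hcard
  obtain ⟨i, hi⟩ := hM (S.map e) (hS.map) (by simpa using hcard)
  obtain ⟨i', rfl⟩ := hr i
  refine ⟨i', ?_⟩
  rw [Finset.filter_map, Finset.card_map] at hi
  exact hi

lemma isDecodableG_id (n d : ℕ) :
    IsDecodableG (fun i j : Fin n => decide (i = j)) d := by
  intro S hS _
  obtain ⟨j, hj⟩ := hS
  refine ⟨j, ?_⟩
  have : S.filter (fun j' => decide (j = j') = true) = {j} := by
    ext x
    simp only [Finset.mem_filter, Finset.mem_singleton, decide_eq_true_eq]
    constructor
    · rintro ⟨_, rfl⟩; rfl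
    · rintro rfl; exact ⟨hj, rfl⟩
  rw [this, Finset.card_singleton]

lemma mStar_le {n d m : ℕ} (M : Fin m → Fin n → Bool) (h : IsDecodableG M d) :
    mStar n d ≤ m :=
  Nat.sInf_le ⟨M, h⟩

lemma mStar_set_nonempty (n d : ℕ) :
    {m | ∃ M : Fin m → Fin n → Bool, IsDecodableG M d}.Nonempty :=
  ⟨n, ⟨fun i j => decide (i = j), isDecodableG_id n d⟩⟩

lemma mStar_exists (n d : ℕ) :
    ∃ M : Fin (mStar n d) → Fin n → Bool, IsDecodableG M d :=
  Nat.sInf_mem (mStar_set_nonempty n d)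

lemma mStar_mono {n n' : ℕ} (d : ℕ) (h : n ≤ n') : mStar n d ≤ mStar n' d := by
  obtain ⟨M, hM⟩ := mStar_exists n' d
  exact mStar_le _ (isDecodableG_reindex id Function.surjective_id
    (Fin.castLEEmb h) hM)

lemma filter_sum_card (S : Finset (κ ⊕ κ')) (p : κ → Bool) (q : κ' → Bool) :
    (S.filter (fun j => Sum.elim p q j = true)).card =
      (S.toLeft.filter (fun j => p j = true)).card +
      (S.toRight.filter (fun j => q j = true)).card := by
  rw [← Finset.card_toLeft_add_card_toRight]
  congr 1
  · congr 1; ext x; simp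
  · congr 1; ext x; simp

instance {ι κ : Type*} [Fintype ι] [Fintype κ] [DecidableEq κ] (M : ι → κ → Bool) (d : ℕ) :
    Decidable (IsDecodableG M d) := by
  unfold IsDecodableG; infer_instance

end Aux

lemma doubled_decodable : ∀ c m : ℕ, ∀ M : Fin m → Fin c → Bool, IsDecodableG M 3 →
      IsDecodableG (doubled M) 3 := by
  intro c m M hM S hS hcard
  have hsplit := S.card_toLeft_add_card_toRight
  have hrow0 : (S.filter (fun j => doubled M (Sum.inl 0) j = true)).card = S.toLeft.card := by
    have he : S.filter (fun j => doubled M (Sum.inl 0) j = true)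
        = S.filter (fun j : Fin c ⊕ Fin c =>
            Sum.elim (fun _ : Fin c => true) (fun _ : Fin c => false) j = true) :=
      Finset.filter_congr (fun x _ => by cases x <;> simp [doubled])
    rw [he, filter_sum_card]
    simp
  have hrow1 : (S.filter (fun j => doubled M (Sum.inl 1) j = true)).card = S.toRight.card := by
    have he : S.filter (fun j => doubled M (Sum.inl 1) j = true)
        = S.filter (fun j : Fin c ⊕ Fin c =>
            Sum.elim (fun _ : Fin c => false) (fun _ : Fin c => true) j = true) :=
      Finset.filter_congr (fun x _ => by cases x <;> simp [doubled])
    rw [he, filter_sum_card]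
    simp
  rcases Nat.eq_zero_or_pos S.toLeft.card with hL | hL
  · -- all columns are on the right
    have hSc : 0 < S.card := Finset.card_pos.mpr hS
    have hRne : S.toRight.Nonempty := by
      rw [← Finset.card_pos]
      omega
    obtain ⟨i, hi⟩ := hM S.toRight hRne (le_trans S.card_toRight_le hcard)
    refine ⟨Sum.inr i, ?_⟩
    have he : S.filter (fun j => doubled M (Sum.inr i) j = true)
        = S.filter (fun j : Fin c ⊕ Fin c => Sum.elim (M i) (M i) j = true) :=
      Finset.filter_congr (fun x _ => by cases x <;> simp [doubled])
    rw [he, filter_sum_card]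
    have : S.toLeft.filter (fun j => M i j = true) = ∅ := by
      apply Finset.eq_empty_of_forall_notMem
      intro x hx
      have := Finset.card_eq_zero.mp hL
      rw [this] at hx
      exact absurd (Finset.mem_filter.mp hx).1 (Finset.notMem_empty x)
    rw [this]
    simpa using hi
  · rcases Nat.eq_zero_or_pos S.toRight.card with hR | hR
    · -- all columns are on the left
      have hLne : S.toLeft.Nonempty := by rw [← Finset.card_pos]; omega
      obtain ⟨i, hi⟩ := hM S.toLeft hLne (le_trans S.card_toLeft_le hcard)
      refine ⟨Sum.inr i, ?_⟩
      have he : S.filter (fun j => doubled M (Sum.inr i) j = true)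
          = S.filter (fun j : Fin c ⊕ Fin c => Sum.elim (M i) (M i) j = true) :=
        Finset.filter_congr (fun x _ => by cases x <;> simp [doubled])
      rw [he, filter_sum_card]
      have : S.toRight.filter (fun j => M i j = true) = ∅ := by
        apply Finset.eq_empty_of_forall_notMem
        intro x hx
        have := Finset.card_eq_zero.mp hR
        rw [this] at hx
        exact absurd (Finset.mem_filter.mp hx).1 (Finset.notMem_empty x)
      rw [this]
      simpa using hi
    · -- both sides nonempty: one side has exactly one column
      have hc : S.toLeft.card = 1 ∨ S.toRight.card = 1 := by omega
      rcases hc with h1 | h1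
      · exact ⟨Sum.inl 0, by rw [hrow0, h1]⟩
      · exact ⟨Sum.inl 1, by rw [hrow1, h1]⟩

lemma mStar_double (c : ℕ) : mStar (c + c) 3 ≤ 2 + mStar c 3 := by
  obtain ⟨M, hM⟩ := mStar_exists c 3
  have h2 := doubled_decodable c _ M hM
  have := isDecodableG_reindex (d := 3)
    (fun i : Fin (2 + mStar c 3) => finSumFinEquiv.symm i)
    (Equiv.surjective _) (finSumFinEquiv.symm.toEmbedding) h2
  exact mStar_le _ this

theorem doubling_bound :
    (∀ c m : ℕ, ∀ M : Fin m → Fin c → Bool, IsDecodableG M 3 →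
      IsDecodableG (doubled M) 3) ∧
    IsDecodableG (fun (i : Fin 3) (j : Fin 4) =>
      decide (j.val = i.val) || decide (j.val = 3)) 3 ∧
    mStar 4 3 = 3 ∧
    (∀ n : ℕ, 4 ≤ n → mStar n 3 ≤ 2 * Nat.clog 2 n - 1) := by
  have hbase : IsDecodableG (fun (i : Fin 3) (j : Fin 4) =>
      decide (j.val = i.val) || decide (j.val = 3)) 3 := by decide
  have hub : mStar 4 3 ≤ 3 := mStar_le _ hbase
  have hno2 : ∀ M : Fin 2 → Fin 4 → Bool, ¬ IsDecodableG M 3 := by decide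
  have hlb : 3 ≤ mStar 4 3 := by
    apply le_csInf (mStar_set_nonempty 4 3)
    rintro m ⟨M, hM⟩
    by_contra hm
    push_neg at hm
    have hm' : m ≤ 2 := by omega
    have : IsDecodableG (fun (i : Fin 2) (j : Fin 4) =>
        if h : (i : ℕ) < m then M ⟨i, h⟩ j else false) 3 := by
      intro S hS hcard
      obtain ⟨i, hi⟩ := hM S hS hcard
      refine ⟨⟨i, lt_of_lt_of_le i.isLt hm'⟩, ?_⟩
      simpa [i.isLt] using hi
    exact hno2 _ this
  have h4 : mStar 4 3 = 3 := le_antisymm hub hlb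
  have hpow : ∀ k : ℕ, mStar (2 ^ (k + 2)) 3 ≤ 2 * k + 3 := by
    intro k
    induction k with
    | zero => simpa [h4] using le_of_eq h4
    | succ k ih =>
      have heq : (2 : ℕ) ^ (k + 1 + 2) = 2 ^ (k + 2) + 2 ^ (k + 2) := by ring
      rw [heq]
      calc mStar (2 ^ (k + 2) + 2 ^ (k + 2)) 3 ≤ 2 + mStar (2 ^ (k + 2)) 3 :=
            mStar_double _
        _ ≤ 2 + (2 * k + 3) := by omega
        _ = 2 * (k + 1) + 3 := by ring
  refine ⟨doubled_decodable, hbase, h4, ?_⟩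
  intro n hn
  set k := Nat.clog 2 n with hk
  have hk2 : 2 ≤ k :=
    (Nat.lt_clog_iff_pow_lt (by norm_num)).mpr (show 2 ^ 1 < n by omega)
  have hnle : n ≤ 2 ^ k := Nat.le_pow_clog (by norm_num) n
  calc mStar n 3 ≤ mStar (2 ^ k) 3 := mStar_mono 3 hnle
    _ = mStar (2 ^ ((k - 2) + 2)) 3 := by rw [Nat.sub_add_cancel hk2]
    _ ≤ 2 * (k - 2) + 3 := hpow _
    _ ≤ 2 * k - 1 := by omega
end
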